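/- If S is a feasible simplification of Sub(r) and v ∈ S, then S ∩ Sub(v) is a feasible simplification of Sub(v). -/
import Mathlib


/-- `u` is a child of `w` in the rooted tree given by the parent function. -/
def ChildRel {V : Type*} (parent : V → Option V) (w u : V) : Prop :=
  parent u = some w

/-- `w` is a (weak) descendant of `v`. -/
def Descend {V : Type*} (parent : V → Option V) (v w : V) : Prop :=
  Relation.ReflTransGen (ChildRel parent) v w

/-- `w` is a strict descendant of `v`. -/
def StrictDescend {V : Type*} (parent : V → Option V) (v w : V) : Prop :=
  Relation.TransGen (ChildRel parent) v w

/-- The vertex set `SubTree(v)` of the subtree rooted at `v`. -/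
def SubTree {V : Type*} (parent : V → Option V) (v : V) : Set V :=
  {w | Descend parent v w}

/-- A leaf is a vertex with no children. -/
def IsLeaf {V : Type*} (parent : V → Option V) (v : V) : Prop :=
  ∀ u, parent u ≠ some v

/-- `T` is a finite rooted tree with root `r`: the root has no parent and every vertex is
a descendant of the root. -/
def IsRootedTree {V : Type*} (parent : V → Option V) (r : V) : Prop :=
  parent r = none ∧ ∀ v, Descend parent r v

/-- `x` lies on the tree path from `v` down to `u`. -/
def OnPath {V : Type*} (parent : V → Option V) (v u x : V) : Prop :=
  Descend parent v x ∧ Descend parent x u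

/-- `a` and `b` are consecutive elements of `S` along the tree path from `v` to `u`. -/
def Consecutive {V : Type*} (parent : V → Option V) (S : Set V) (v u a b : V) : Prop :=
  a ∈ S ∧ b ∈ S ∧ OnPath parent v u a ∧ OnPath parent v u b ∧
    StrictDescend parent a b ∧
    ¬ ∃ c ∈ S, OnPath parent v u c ∧ StrictDescend parent a c ∧ StrictDescend parent c b

/-- `S ⊆ SubTree(v)` is a feasible simplification of `SubTree(v)`: it contains `v` and every leaf
of `SubTree(v)`, and for every leaf `u` of `SubTree(v)` every pair of consecutive elements of `S`
along the tree path from `v` to `u` is a shortcut of `Es`. -/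
def Feasible {V : Type*} (parent : V → Option V) (Es : V → V → Prop) (v : V)
    (S : Set V) : Prop :=
  S ⊆ SubTree parent v ∧ v ∈ S ∧
  (∀ u ∈ SubTree parent v, IsLeaf parent u → u ∈ S) ∧
  (∀ u ∈ SubTree parent v, IsLeaf parent u →
    ∀ a b, Consecutive parent S v u a b → Es a b)

/-- `s(v)`: the minimum cardinality of a feasible simplification of `SubTree(v)`. -/
noncomputable def sVal {V : Type*} (parent : V → Option V) (Es : V → V → Prop)
    (v : V) : ℕ :=
  sInf {k | ∃ S : Set V, Feasible parent Es v S ∧ S.ncard = k}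

/-- The set `N(w)` of children of `w`. -/
def childrenOf {V : Type*} [Fintype V] [DecidableEq V] (parent : V → Option V)
    (w : V) : Finset V :=
  Finset.univ.filter (fun u => parent u = some w)

/-- Optimal substructure: if `S` is a feasible simplification of `Sub(r)` and `v ∈ S`,
then `S ∩ Sub(v)` is a feasible simplification of `Sub(v)`. -/
theorem feasible_inter_subtree {V : Type*} [Fintype V] [DecidableEq V]
    (parent : V → Option V) (r : V) (Es : V → V → Prop)
    (htree : IsRootedTree parent r)
    (hEsDesc : ∀ a b, Es a b → StrictDescend parent a b)
    (hEsParent : ∀ w u, parent u = some w → Es w u)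
    (S : Set V) (hS : Feasible parent Es r S) (v : V) (hv : v ∈ S) :
    Feasible parent Es v (S ∩ SubTree parent v) := by
  obtain ⟨hSsub, hrS, hleaf, hcons⟩ := hS
  refine ⟨fun x hx => hx.2, ⟨hv, Relation.ReflTransGen.refl⟩, ?_, ?_⟩
  · intro u hu hl; exact ⟨hleaf u (htree.2 u) hl, hu⟩
  · intro u hu hl a b hab
    obtain ⟨haS, hbS, hpa, hpb, hsab, hnc⟩ := hab
    apply hcons u (htree.2 u) hl a b
    refine ⟨haS.1, hbS.1, ⟨htree.2 a, hpa.2⟩, ⟨htree.2 b, hpb.2⟩, hsab, ?_⟩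
    rintro ⟨c, hcS, ⟨_, hcu⟩, hac, hcb⟩
    exact hnc ⟨c, ⟨hcS, hpa.1.trans hac.to_reflTransGen⟩,
      ⟨hpa.1.trans hac.to_reflTransGen, hcu⟩, hac, hcb⟩
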